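/- Let G be a finitely generated group with a finite symmetric generating set S (S = S⁻¹) that contains a nilpotent subgroup of finite index, and let A be a finite subgroup of Aut(G). Let T = {a(s) : s ∈ S, a ∈ A} ⊆ G. Then there exist a constant C > 0 and a natural number k such that for every r ≥ 1, the number of A-orbits meeting B⁺_T(r) — equivalently Nat.card (π '' B⁺_T(r)), which equals the cardinality of the ball of radius r centered at the unit in the Cayley graph of the n-valued coset group X = (G, A) with respect to the generating set π(S) — is at most C·r^k. In other words, the coset group of a finitely generated virtually nilpotent group by a finite group of automorphisms has polynomial growth. -/

import Mathlib

variable {G : Type*} [Group G]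

/-- `W T r`: the set of products of exactly `r` elements of `T` (with `W T 0 = {1}`). -/
def wordSet (T : Set G) (r : ℕ) : Set G :=
  {x | ∃ l : List G, l.length = r ∧ (∀ t ∈ l, t ∈ T) ∧ l.prod = x}

/-- The monoid ball `B⁺_T(r) = ⋃_{m=0}^{r} W_m(T)`. -/
def monoidBall (T : Set G) (r : ℕ) : Set G :=
  {x | ∃ l : List G, l.length ≤ r ∧ (∀ t ∈ l, t ∈ T) ∧ l.prod = x}

/-- The monoid sphere `S⁺_T(r) = B⁺_T(r) \ B⁺_T(r-1)`. -/
def monoidSphere (T : Set G) (r : ℕ) : Set G := monoidBall T r \ monoidBall T (r - 1)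

/-- `π : G → G/A`, sending `g` to its `A`-orbit `{a(g) : a ∈ A}`. -/
def orbitMap (A : Subgroup (MulAut G)) : G → Set G :=
  fun g => {x | ∃ a ∈ A, a g = x}

set_option linter.unusedSectionVars false

open scoped commutatorElement

namespace MB

theorem one_mem (T : Set G) (r : ℕ) : (1 : G) ∈ monoidBall T r :=
  ⟨[], by simp⟩

theorem mono_r {T : Set G} {r r' : ℕ} (h : r ≤ r') : monoidBall T r ⊆ monoidBall T r' :=
  fun _ ⟨l, hl, he, hp⟩ => ⟨l, hl.trans h, he, hp⟩

theorem mono_set {T T' : Set G} (h : T ⊆ T') (r : ℕ) : monoidBall T r ⊆ monoidBall T' r :=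
  fun _ ⟨l, hl, he, hp⟩ => ⟨l, hl, fun t ht => h (he t ht), hp⟩

theorem mul_mem {T : Set G} {r s : ℕ} {a b : G} (ha : a ∈ monoidBall T r)
    (hb : b ∈ monoidBall T s) : a * b ∈ monoidBall T (r + s) := by
  obtain ⟨l, hl, he, hp⟩ := ha
  obtain ⟨l', hl', he', hp'⟩ := hb
  exact ⟨l ++ l', by simpa using Nat.add_le_add hl hl',
    by intro t ht; rcases List.mem_append.1 ht with h | h; exacts [he t h, he' t h],
    by simp [hp, hp']⟩

theorem single_mem {T : Set G} {t : G} (ht : t ∈ T) {r : ℕ} (hr : 1 ≤ r) :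
    t ∈ monoidBall T r := ⟨[t], by simpa, by simpa, by simp⟩

theorem finite {T : Set G} (hT : T.Finite) (r : ℕ) : (monoidBall T r).Finite := by
  have : Finite ↥T := hT
  have h1 : {l : List ↥T | l.length ≤ r}.Finite := List.finite_length_le ↥T r
  have h2 : ((fun l : List ↥T => (l.map Subtype.val).prod) '' {l | l.length ≤ r}).Finite :=
    h1.image _
  refine h2.subset ?_
  rintro x ⟨l, hl, he, rfl⟩
  refine ⟨l.pmap (fun a ha => (⟨a, ha⟩ : ↥T)) he, by simpa using hl, ?_⟩
  simp [List.map_pmap]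

theorem card_le_subtype {H : Subgroup G} {T : Set G} (hT : T ⊆ (H : Set G)) (hTf : T.Finite)
    (r : ℕ) :
    Nat.card (monoidBall T r) ≤
      Nat.card (monoidBall ((H.subtype) ⁻¹' T) r) := by
  have hsub : monoidBall T r ⊆ (H.subtype) '' monoidBall ((H.subtype) ⁻¹' T) r := by
    rintro x ⟨l, hl, he, rfl⟩
    refine ⟨(l.pmap (fun a ha => (⟨a, ha⟩ : H)) (fun a ha => hT (he a ha))).prod, ?_, ?_⟩
    · exact ⟨_, by simpa using hl, by
        intro t ht
        simp only [List.mem_pmap] at ht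
        obtain ⟨a, ha, rfl⟩ := ht
        exact he a ha, rfl⟩
    · rw [map_list_prod]
      simp [List.map_pmap]
  calc Nat.card (monoidBall T r) ≤ Nat.card ((H.subtype) '' monoidBall ((H.subtype) ⁻¹' T) r) :=
        Nat.card_mono (((finite (hTf.preimage (Subtype.val_injective.injOn)) r)).image _) hsub
    _ ≤ Nat.card (monoidBall ((H.subtype) ⁻¹' T) r) :=
        Nat.card_image_le (finite (hTf.preimage (Subtype.val_injective.injOn)) r)

end MB

namespace Nilp

variable {H : Type*} [Group H]

/-- graded commutator sets -/
def Yl (U : Set H) : ℕ → Set H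
  | 0 => {z | ∃ a ∈ U, ∃ b ∈ U, ⁅a, b⁆ = z}
  | (w+1) => {z | ∃ y, (y ∈ Yl U w ∨ y⁻¹ ∈ Yl U w) ∧ ∃ x ∈ U, (z = ⁅y, x⁆ ∨ z = ⁅x, y⁆)}

def Ytot (U : Set H) (d : ℕ) : Set H := ⋃ w < d, Yl U w

theorem Yl_sub (U : Set H) : ∀ w, Yl U w ⊆ lowerCentralSeries (⊤ : Subgroup H) (w + 1) := by
  intro w
  induction w with
  | zero =>
    rintro z ⟨a, _, b, _, rfl⟩
    exact Subgroup.commutator_mem_commutator (Subgroup.mem_top a) (Subgroup.mem_top b)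
  | succ w ih =>
    rintro z ⟨y, hy, x, _, rfl | rfl⟩
    · have hy' : y ∈ lowerCentralSeries (⊤ : Subgroup H) (w + 1) := by
        rcases hy with h | h
        · exact ih h
        · simpa using (lowerCentralSeries (⊤ : Subgroup H) (w + 1)).inv_mem (ih h)
      exact Subgroup.commutator_mem_commutator hy' (Subgroup.mem_top x)
    · have hy' : y ∈ lowerCentralSeries (⊤ : Subgroup H) (w + 1) := by
        rcases hy with h | h
        · exact ih h
        · simpa using (lowerCentralSeries (⊤ : Subgroup H) (w + 1)).inv_mem (ih h)
      have : ⁅x, y⁆ ∈ ⁅(⊤ : Subgroup H), lowerCentralSeries (⊤ : Subgroup H) (w + 1)⁆ :=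
        Subgroup.commutator_mem_commutator (Subgroup.mem_top x) hy'
      rwa [Subgroup.commutator_comm] at this

theorem Yl_finite {U : Set H} (hU : U.Finite) : ∀ w, (Yl U w).Finite := by
  intro w
  induction w with
  | zero =>
    have : Yl U 0 ⊆ Set.image2 (fun a b => ⁅a, b⁆) U U := by
      rintro z ⟨a, ha, b, hb, rfl⟩; exact ⟨a, ha, b, hb, rfl⟩
    exact (Set.Finite.image2 _ hU hU).subset this
  | succ w ih =>
    have : Yl U (w+1) ⊆ (Set.image2 (fun y x => ⁅y, x⁆) (Yl U w ∪ (Yl U w)⁻¹) U) ∪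
        (Set.image2 (fun x y => ⁅x, y⁆) U (Yl U w ∪ (Yl U w)⁻¹)) := by
      rintro z ⟨y, hy, x, hx, rfl | rfl⟩
      · refine Or.inl ⟨y, ?_, x, hx, rfl⟩
        rcases hy with h | h
        · exact Or.inl h
        · exact Or.inr (by simpa using h)
      · refine Or.inr ⟨x, hx, y, ?_, rfl⟩
        rcases hy with h | h
        · exact Or.inl h
        · exact Or.inr (by simpa using h)
    refine Set.Finite.subset ?_ this
    exact (Set.Finite.image2 _ (ih.union ih.inv) hU).union (Set.Finite.image2 _ hU (ih.union ih.inv))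

theorem Ytot_finite {U : Set H} (hU : U.Finite) (d : ℕ) : (Ytot U d).Finite := by
  refine Set.Finite.biUnion (Set.finite_Iio d) fun w _ => Yl_finite hU w

theorem Yl_sub_Ytot {U : Set H} {w d : ℕ} (h : w < d) : Yl U w ⊆ Ytot U d :=
  Set.subset_biUnion_of_mem h

variable {U : Set H} {d' : ℕ}

/-- trivial letters above the class -/
theorem Yl_eq_one (hlcs : lowerCentralSeries (⊤ : Subgroup H) (d' + 1) = ⊥) {w : ℕ} (hw : d' ≤ w)
    {y : H} (hy : y ∈ Yl U w) : y = 1 := by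
  have h1 : y ∈ lowerCentralSeries (⊤ : Subgroup H) (w + 1) := Yl_sub U w hy
  have h2 : lowerCentralSeries (⊤ : Subgroup H) (w + 1) ≤ lowerCentralSeries (⊤ : Subgroup H) (d' + 1) :=
    lowerCentralSeries_antitone _ (by omega)
  have := h2 h1
  rw [hlcs] at this
  simpa using this

/-- Lemma C: conjugating a single graded letter by a `U`-word. -/
theorem conj_letter (hUsym : ∀ x ∈ U, x⁻¹ ∈ U)
    (hlcs : lowerCentralSeries (⊤ : Subgroup H) (d' + 1) = ⊥) :
    ∀ (u : List H), (∀ t ∈ u, t ∈ U) → ∀ w y, y ∈ Yl U w →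
      (u.prod)⁻¹ * y * u.prod ∈ monoidBall (Ytot U (d' + 1)) ((u.length + 1) ^ (d' - w)) := by
  intro u
  induction u with
  | nil =>
    intro _ w y hy
    simp only [List.prod_nil, List.length_nil, inv_one, one_mul, mul_one]
    by_cases hw : d' ≤ w
    · rw [Yl_eq_one hlcs hw hy]
      exact MB.one_mem _ _
    · exact MB.single_mem (Yl_sub_Ytot (by omega) hy) (Nat.one_le_iff_ne_zero.2 (by positivity))
  | cons x u' ih =>
    intro hu w y hy
    have hx : x ∈ U := hu x (List.mem_cons_self)
    have hu' : ∀ t ∈ u', t ∈ U := fun t ht => hu t (List.mem_cons_of_mem _ ht)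
    by_cases hw : d' ≤ w
    · rw [Yl_eq_one hlcs hw hy]
      have : ((x :: u').prod)⁻¹ * 1 * (x :: u').prod = 1 := by group
      rw [this]
      exact MB.one_mem _ _
    · -- z = ⁅y⁻¹, x⁻¹⁆ ∈ Yl U (w+1), and x⁻¹ * y * x = y * z
      set z : H := ⁅y⁻¹, x⁻¹⁆ with hz
      have hzY : z ∈ Yl U (w + 1) :=
        ⟨y⁻¹, Or.inr (by simpa using hy), x⁻¹, hUsym x hx, Or.inl rfl⟩
      have key : ((x :: u').prod)⁻¹ * y * (x :: u').prod =
          ((u'.prod)⁻¹ * y * u'.prod) * ((u'.prod)⁻¹ * z * u'.prod) := by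
        rw [List.prod_cons, hz]
        group
      rw [key]
      have h1 := ih hu' w y hy
      have h2 := ih hu' (w + 1) z hzY
      have h3 := MB.mul_mem h1 h2
      refine MB.mono_r ?_ h3
      have hb : d' - w = (d' - (w + 1)) + 1 := by omega
      set b := d' - (w + 1)
      rw [hb]
      set n := u'.length
      calc (n + 1) ^ (b + 1) + (n + 1) ^ b = (n + 1) ^ b * (n + 2) := by ring
        _ ≤ (n + 2) ^ b * (n + 2) := by
            exact Nat.mul_le_mul_right _ (Nat.pow_le_pow_left (by omega) b)
        _ = (n + 1 + 1) ^ (b + 1) := by ring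

/-- product of list elements each in a ball -/
theorem prod_mem_ball {Y : Set H} {s : ℕ} :
    ∀ (l : List H), (∀ y ∈ l, y ∈ monoidBall Y s) → l.prod ∈ monoidBall Y (l.length * s) := by
  intro l
  induction l with
  | nil => intro _; simpa using MB.one_mem _ _
  | cons a l ih =>
    intro h
    rw [List.prod_cons]
    have := MB.mul_mem (h a (List.mem_cons_self))
      (ih fun y hy => h y (List.mem_cons_of_mem _ hy))
    refine MB.mono_r ?_ this
    simp [List.length_cons, add_mul, add_comm]

/-- conjugate of a product is product of conjugates -/
theorem conj_prod (p : H) : ∀ (l : List H),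
    p⁻¹ * l.prod * p = (l.map fun y => p⁻¹ * y * p).prod := by
  intro l
  induction l with
  | nil => simp
  | cons a l ih => rw [List.prod_cons, List.map_cons, List.prod_cons, ← ih]; group

/-- Lemma CW: conjugating a `Ytot`-ball element by a `U`-word. -/
theorem conj_ball (hUsym : ∀ x ∈ U, x⁻¹ ∈ U)
    (hlcs : lowerCentralSeries (⊤ : Subgroup H) (d' + 1) = ⊥)
    (u : List H) (hu : ∀ t ∈ u, t ∈ U) {t : ℕ} {v : H}
    (hv : v ∈ monoidBall (Ytot U (d' + 1)) t) :
    (u.prod)⁻¹ * v * u.prod ∈ monoidBall (Ytot U (d' + 1)) (t * (u.length + 1) ^ d') := by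
  obtain ⟨l, hl, he, rfl⟩ := hv
  rw [conj_prod]
  have h1 : ∀ y ∈ l.map fun y => (u.prod)⁻¹ * y * u.prod,
      y ∈ monoidBall (Ytot U (d' + 1)) ((u.length + 1) ^ d') := by
    intro y hy
    simp only [List.mem_map] at hy
    obtain ⟨y₀, hy₀, rfl⟩ := hy
    obtain ⟨w, hwlt, hyY⟩ : ∃ w, w < d' + 1 ∧ y₀ ∈ Yl U w := by
      have := he y₀ hy₀
      simp only [Ytot, Set.mem_iUnion] at this
      obtain ⟨w, hw, h⟩ := this
      exact ⟨w, hw, h⟩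
    exact MB.mono_r (Nat.pow_le_pow_right (Nat.succ_le_succ (Nat.zero_le _)) (Nat.sub_le _ _))
      (conj_letter hUsym hlcs u hu w y₀ hyY)
  have := prod_mem_ball _ h1
  refine MB.mono_r ?_ this
  simp only [List.length_map]
  exact Nat.mul_le_mul_right _ hl

/-- Lemma CPW: commuting a generator past a `U`-word. -/
theorem comm_past (hUsym : ∀ x ∈ U, x⁻¹ ∈ U)
    (hlcs : lowerCentralSeries (⊤ : Subgroup H) (d' + 1) = ⊥) {x : H} (hx : x ∈ U) :
    ∀ (u : List H), (∀ t ∈ u, t ∈ U) →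
      ∃ τ ∈ monoidBall (Ytot U (d' + 1)) (u.length * (u.length + 1) ^ d'),
        x * u.prod = u.prod * x * τ := by
  intro u
  induction u with
  | nil => exact fun _ => ⟨1, MB.one_mem _ _, by simp⟩
  | cons y u' ih =>
    intro hu
    have hy : y ∈ U := hu y (List.mem_cons_self)
    have hu' : ∀ t ∈ u', t ∈ U := fun t ht => hu t (List.mem_cons_of_mem _ ht)
    obtain ⟨τ', hτ', hid⟩ := ih hu'
    set z : H := ⁅x⁻¹, y⁻¹⁆ with hzdef
    have hzY : z ∈ Yl U 0 := ⟨x⁻¹, hUsym x hx, y⁻¹, hUsym y hy, rfl⟩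
    have hcz := conj_letter hUsym hlcs u' hu' 0 z hzY
    refine ⟨τ' * ((u'.prod)⁻¹ * z * u'.prod), ?_, ?_⟩
    · have := MB.mul_mem hτ' hcz
      refine MB.mono_r ?_ this
      set n := u'.length
      rw [Nat.sub_zero]
      calc n * (n + 1) ^ d' + (n + 1) ^ d' = (n + 1) * (n + 1) ^ d' := by ring
        _ ≤ (n + 1) * (n + 2) ^ d' := Nat.mul_le_mul_left _ (Nat.pow_le_pow_left (by omega) _)
        _ = (y :: u').length * ((y :: u').length + 1) ^ d' := by simp [List.length_cons]; rfl
    · have hxy : x * y = y * x * z := by rw [hzdef]; group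
      rw [List.prod_cons, show x * (y * u'.prod) = (x * y) * u'.prod by group, hxy]
      have hzu : z * u'.prod = u'.prod * ((u'.prod)⁻¹ * z * u'.prod) := by group
      calc y * x * z * u'.prod = y * x * (z * u'.prod) := by group
        _ = y * x * (u'.prod * ((u'.prod)⁻¹ * z * u'.prod)) := by rw [hzu]
        _ = y * (x * u'.prod) * ((u'.prod)⁻¹ * z * u'.prod) := by group
        _ = y * (u'.prod * x * τ') * ((u'.prod)⁻¹ * z * u'.prod) := by rw [hid]
        _ = (y :: u').prod * x * (τ' * ((u'.prod)⁻¹ * z * u'.prod)) := by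
            rw [List.prod_cons]; group

/-- product of powers -/
def pp (L : List H) (a : List ℕ) : H := (List.zipWith (fun x k => x ^ k) L a).prod

/-- the word spelling `pp L a` -/
def ppw (L : List H) (a : List ℕ) : List H :=
  (List.zipWith (fun (x : H) (k : ℕ) => List.replicate k x) L a).flatten

theorem ppw_prod : ∀ (L : List H) (a : List ℕ), (ppw L a).prod = pp L a := by
  intro L
  induction L with
  | nil => intro a; simp [ppw, pp]
  | cons x L ih =>
    intro a
    cases a with
    | nil => simp [ppw, pp]
    | cons k a => simp [ppw, pp, List.prod_cons] at ih ⊢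

theorem ppw_mem {L : List H} (hL : ∀ t ∈ L, t ∈ U) (a : List ℕ) :
    ∀ t ∈ ppw L a, t ∈ U := by
  intro t ht
  simp only [ppw, List.mem_flatten] at ht
  obtain ⟨l, hl, htl⟩ := ht
  rw [List.mem_iff_get] at hl
  obtain ⟨n, rfl⟩ := hl
  simp only [List.get_eq_getElem, List.getElem_zipWith] at htl
  have hmem := List.eq_of_mem_replicate htl
  subst hmem
  exact hL _ (List.get_mem _ _)

theorem ppw_length : ∀ (L : List H) (a : List ℕ), a.length = L.length →
    (ppw L a).length = a.sum := by
  intro L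
  induction L with
  | nil => intro a ha; simp at ha; simp [ppw, ha]
  | cons x L ih =>
    intro a ha
    cases a with
    | nil => simp at ha
    | cons k a =>
      simp only [ppw, List.zipWith_cons_cons, List.flatten_cons, List.length_append,
        List.length_replicate, List.sum_cons]
      simp only [List.length_cons, Nat.succ_inj] at ha
      rw [← ih a ha]; rfl

theorem pp_replicate_zero : ∀ (L : List H), pp L (List.replicate L.length 0) = 1 := by
  intro L
  induction L with
  | nil => simp [pp]
  | cons x L ih =>
    rw [List.length_cons, List.replicate_succ]
    simpa [pp, List.prod_cons] using ih

/-- Lemma I': inserting a generator into a power product. -/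
theorem insert_pp (hUsym : ∀ x ∈ U, x⁻¹ ∈ U)
    (hlcs : lowerCentralSeries (⊤ : Subgroup H) (d' + 1) = ⊥) :
    ∀ (L : List H) (a : List ℕ) (x : H), (∀ t ∈ L, t ∈ U) → x ∈ L → a.length = L.length →
      ∃ a' : List ℕ, a'.length = L.length ∧ a'.sum = a.sum + 1 ∧
        ∃ τ ∈ monoidBall (Ytot U (d' + 1)) (a.sum * (a.sum + 1) ^ (2 * d' + 1)),
          x * pp L a = pp L a' * τ := by
  intro L
  induction L with
  | nil => intro a x _ hx _; simp at hx
  | cons y L' ih =>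
    intro a x hL hx ha
    cases a with
    | nil => simp at ha
    | cons k a2 =>
      simp only [List.length_cons, Nat.succ_inj] at ha
      have hy : y ∈ U := hL y (List.mem_cons_self)
      have hL' : ∀ t ∈ L', t ∈ U := fun t ht => hL t (List.mem_cons_of_mem _ ht)
      by_cases hxy : x = y
      · subst hxy
        refine ⟨(k + 1) :: a2, by simpa using ha, by simp [List.sum_cons]; omega,
          1, MB.one_mem _ _, ?_⟩
        simp only [pp, List.zipWith_cons_cons, List.prod_cons, mul_one]
        rw [← mul_assoc, ← pow_succ']
      · have hxL' : x ∈ L' := by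
          rcases List.mem_cons.1 hx with h | h
          · exact absurd h hxy
          · exact h
        have hxU : x ∈ U := hL' x hxL'
        -- commute x past y^k
        obtain ⟨τ₀, hτ₀, hid₀⟩ := comm_past hUsym hlcs hxU (List.replicate k y)
          (fun t ht => by rw [List.eq_of_mem_replicate ht]; exact hy)
        rw [List.prod_replicate] at hid₀
        rw [List.length_replicate] at hτ₀
        -- conjugate τ₀ past P = pp L' a2
        have hcτ₀ := conj_ball hUsym hlcs (ppw L' a2) (ppw_mem hL' a2) hτ₀
        rw [ppw_prod, ppw_length L' a2 ha] at hcτ₀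
        -- IH
        obtain ⟨a2', ha2'len, ha2'sum, τ₁, hτ₁, hid₁⟩ := ih a2 x hL' hxL' ha
        refine ⟨k :: a2', by simpa using ha2'len, by simp [List.sum_cons]; omega,
          τ₁ * ((pp L' a2)⁻¹ * τ₀ * pp L' a2), ?_, ?_⟩
        · have := MB.mul_mem hτ₁ hcτ₀
          refine MB.mono_r ?_ this
          set S2 := a2.sum
          have hsum : (k :: a2).sum = k + S2 := by simp [List.sum_cons]; rfl
          rw [hsum]
          set S := k + S2
          have h1 : S2 * (S2 + 1) ^ (2 * d' + 1) ≤ S2 * (S + 1) ^ (2 * d' + 1) :=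
            Nat.mul_le_mul_left _ (Nat.pow_le_pow_left (by omega) _)
          have h2 : k * (k + 1) ^ d' * (S2 + 1) ^ d' ≤ k * (S + 1) ^ (2 * d' + 1) := by
            calc k * (k + 1) ^ d' * (S2 + 1) ^ d' ≤ k * (S + 1) ^ d' * (S + 1) ^ d' := by
                  exact Nat.mul_le_mul (Nat.mul_le_mul_left _
                    (Nat.pow_le_pow_left (by omega) _)) (Nat.pow_le_pow_left (by omega) _)
              _ = k * (S + 1) ^ (2 * d') := by rw [mul_assoc, ← pow_add, two_mul]
              _ ≤ k * (S + 1) ^ (2 * d' + 1) := Nat.mul_le_mul_left _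
                    (Nat.pow_le_pow_right (by omega) (by omega))
          calc S2 * (S2 + 1) ^ (2 * d' + 1) + k * (k + 1) ^ d' * (S2 + 1) ^ d'
              ≤ S2 * (S + 1) ^ (2 * d' + 1) + k * (S + 1) ^ (2 * d' + 1) := Nat.add_le_add h1 h2
            _ = S * (S + 1) ^ (2 * d' + 1) := by ring
        · have hpp : pp (y :: L') (k :: a2) = y ^ k * pp L' a2 := by
            simp [pp, List.prod_cons]
          have hpp' : pp (y :: L') (k :: a2') = y ^ k * pp L' a2' := by
            simp [pp, List.prod_cons]
          rw [hpp, hpp']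
          calc x * (y ^ k * pp L' a2) = (x * y ^ k) * pp L' a2 := by group
            _ = (y ^ k * x * τ₀) * pp L' a2 := by rw [hid₀]
            _ = y ^ k * x * (τ₀ * pp L' a2) := by group
            _ = y ^ k * x * (pp L' a2 * ((pp L' a2)⁻¹ * τ₀ * pp L' a2)) := by group
            _ = y ^ k * (x * pp L' a2) * ((pp L' a2)⁻¹ * τ₀ * pp L' a2) := by group
            _ = y ^ k * (pp L' a2' * τ₁) * ((pp L' a2)⁻¹ * τ₀ * pp L' a2) := by rw [hid₁]
            _ = y ^ k * pp L' a2' * (τ₁ * ((pp L' a2)⁻¹ * τ₀ * pp L' a2)) := by group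

/-- Lemma N: normal form for `U`-words. -/
theorem normal_form (hUsym : ∀ x ∈ U, x⁻¹ ∈ U)
    (hlcs : lowerCentralSeries (⊤ : Subgroup H) (d' + 1) = ⊥)
    (L : List H) (hLU : ∀ t ∈ L, t ∈ U) (hUL : ∀ x ∈ U, x ∈ L) :
    ∀ (u : List H), (∀ t ∈ u, t ∈ U) →
      ∃ a : List ℕ, a.length = L.length ∧ a.sum = u.length ∧
        ∃ τ ∈ monoidBall (Ytot U (d' + 1)) (u.length * (u.length + 1) ^ (2 * d' + 2)),
          u.prod = pp L a * τ := by
  intro u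
  induction u with
  | nil =>
    intro _
    exact ⟨List.replicate L.length 0, by simp, by simp,
      1, MB.one_mem _ _, by simp [pp_replicate_zero]⟩
  | cons x u' ih =>
    intro hu
    have hx : x ∈ U := hu x (List.mem_cons_self)
    have hu' : ∀ t ∈ u', t ∈ U := fun t ht => hu t (List.mem_cons_of_mem _ ht)
    obtain ⟨a', ha'len, ha'sum, τ', hτ', hid'⟩ := ih hu'
    obtain ⟨a'', ha''len, ha''sum, τ₂, hτ₂, hid₂⟩ :=
      insert_pp hUsym hlcs L a' x hLU (hUL x hx) ha'len
    refine ⟨a'', ha''len, by simp [List.length_cons]; omega, τ₂ * τ', ?_, ?_⟩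
    · have := MB.mul_mem hτ₂ hτ'
      refine MB.mono_r ?_ this
      rw [ha'sum]
      set n := u'.length
      have h1 : n * (n + 1) ^ (2 * d' + 1) ≤ (n + 1) ^ (2 * d' + 2) := by
        calc n * (n + 1) ^ (2 * d' + 1) ≤ (n + 1) * (n + 1) ^ (2 * d' + 1) :=
              Nat.mul_le_mul_right _ (by omega)
          _ = (n + 1) ^ (2 * d' + 2) := by ring
      have h2 : n * (n + 1) ^ (2 * d' + 2) + (n + 1) ^ (2 * d' + 2)
          = (n + 1) * (n + 1) ^ (2 * d' + 2) := by ring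
      calc n * (n + 1) ^ (2 * d' + 1) + n * (n + 1) ^ (2 * d' + 2)
          ≤ (n + 1) ^ (2 * d' + 2) + n * (n + 1) ^ (2 * d' + 2) := Nat.add_le_add_right h1 _
        _ = (n + 1) * (n + 1) ^ (2 * d' + 2) := by ring
        _ ≤ (n + 1) * (n + 2) ^ (2 * d' + 2) :=
            Nat.mul_le_mul_left _ (Nat.pow_le_pow_left (by omega) _)
        _ = (x :: u').length * ((x :: u').length + 1) ^ (2 * d' + 2) := by
            simp [List.length_cons]; rfl
    · rw [List.prod_cons, hid', show x * (pp L a' * τ') = (x * pp L a') * τ' by group, hid₂]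
      group

theorem lcs_subgroup_le (N : Subgroup H) (hN : N = lowerCentralSeries (⊤ : Subgroup H) 1) :
    ∀ k, (lowerCentralSeries (⊤ : Subgroup N) k).map N.subtype ≤ lowerCentralSeries (⊤ : Subgroup H) (k + 1) := by
  intro k
  induction k with
  | zero =>
    show Subgroup.map N.subtype ⊤ ≤ _
    rintro x ⟨y, -, rfl⟩
    simpa using (hN ▸ y.2 : (y : H) ∈ lowerCentralSeries (⊤ : Subgroup H) 1)
  | succ k ih =>
    have h1 : lowerCentralSeries (⊤ : Subgroup ↥N) (k + 1) = ⁅lowerCentralSeries (⊤ : Subgroup ↥N) k, ⊤⁆ := rfl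
    have h2 : lowerCentralSeries (⊤ : Subgroup H) (k + 2) = ⁅lowerCentralSeries (⊤ : Subgroup H) (k + 1), ⊤⁆ := rfl
    rw [h1, h2, Subgroup.map_commutator]
    refine Subgroup.commutator_mono ih ?_
    exact le_top

theorem card_lists_le (m n : ℕ) :
    Nat.card {a : List ℕ | a.length = m ∧ a.sum ≤ n} ≤ (n + 1) ^ m := by
  classical
  have hentry : ∀ a : List ℕ, a.sum ≤ n → ∀ i : ℕ, a.getD i 0 < n + 1 := by
    intro a hsum i
    by_cases hi : i < a.length
    · have h1 : a.getD i 0 = a.get ⟨i, hi⟩ := List.getD_eq_get _ _ ⟨i, hi⟩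
      have h2 : a.get ⟨i, hi⟩ ≤ a.sum :=
        List.single_le_sum (fun x _ => Nat.zero_le x) _ (List.get_mem _ _)
      omega
    · rw [List.getD_eq_default _ _ (le_of_not_gt hi)]; omega
  have hinj : Function.Injective
      (fun a : {a : List ℕ | a.length = m ∧ a.sum ≤ n} =>
        (fun i : Fin m => (⟨a.1.getD i 0, hentry a.1 a.2.2 i⟩ : Fin (n + 1)))) := by
    rintro ⟨a, hlen, hsum⟩ ⟨b, hlen', hsum'⟩ hab
    simp only [Subtype.mk.injEq] at hab ⊢
    refine List.ext_getElem (by omega) ?_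
    intro i h1 h2
    have := congrFun hab ⟨i, by omega⟩
    simp only [Fin.mk.injEq] at this
    rw [List.getD_eq_getElem _ _ h1, List.getD_eq_getElem _ _ h2] at this
    exact this
  calc Nat.card {a : List ℕ | a.length = m ∧ a.sum ≤ n}
      ≤ Nat.card (Fin m → Fin (n + 1)) := Nat.card_le_card_of_injective _ hinj
    _ = (n + 1) ^ m := by simp [Nat.card_eq_fintype_card]

theorem card_prod_set {α β : Type*} (s : Set α) (t : Set β) :
    Nat.card (s ×ˢ t : Set (α × β)) = Nat.card s * Nat.card t := by
  rw [Nat.card_congr (Equiv.Set.prod s t), Nat.card_prod]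

theorem lists_finite (m n : ℕ) : {a : List ℕ | a.length = m ∧ a.sum ≤ n}.Finite := by
  have : {a : List ℕ | a.length = m ∧ a.sum ≤ n} ⊆
      (fun l : List (Fin (n+1)) => l.map Fin.val) '' {l | l.length ≤ m} := by
    rintro a ⟨hlen, hsum⟩
    have hbd : ∀ x ∈ a, x < n + 1 := by
      intro x hx
      have := List.single_le_sum (fun y (_ : y ∈ a) => Nat.zero_le y) x hx
      omega
    refine ⟨a.pmap (fun x hx => (⟨x, hx⟩ : Fin (n+1))) hbd, ?_, ?_⟩
    · simp only [Set.mem_setOf_eq, List.length_pmap]; omega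
    · simp [List.map_pmap]
  exact ((List.finite_length_le (Fin (n+1)) m).image _).subset this

/-- Polynomial growth of balls in nilpotent groups. -/
theorem poly_growth : ∀ (d : ℕ) {H : Type u} [Group H],
    lowerCentralSeries (⊤ : Subgroup H) d = ⊥ → ∀ U : Set H, U.Finite →
    ∃ C k : ℕ, 0 < C ∧ ∀ n : ℕ, 1 ≤ n → Nat.card (monoidBall U n) ≤ C * n ^ k := by
  intro d
  induction d with
  | zero =>
    intro H _ hlcs U _
    refine ⟨1, 0, one_pos, fun n _ => ?_⟩
    have htriv : ∀ x : H, x = 1 := by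
      intro x
      have : x ∈ lowerCentralSeries (⊤ : Subgroup H) 0 := by exact Subgroup.mem_top x
      rw [hlcs] at this
      simpa using this
    have : monoidBall U n ⊆ {1} := fun x _ => htriv x
    calc Nat.card (monoidBall U n) ≤ Nat.card ({1} : Set H) :=
          Nat.card_mono (Set.finite_singleton _) this
      _ = 1 := by simp
      _ ≤ 1 * n ^ 0 := by simp
  | succ d' IH =>
    intro H _ hlcs U hUfin
    -- symmetrize
    set U' : Set H := U ∪ U⁻¹ ∪ {1} with hU'
    have hU'fin : U'.Finite := (hUfin.union hUfin.inv).union (Set.finite_singleton _)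
    have hU'sym : ∀ x ∈ U', x⁻¹ ∈ U' := by
      rintro x ((h | h) | h)
      · exact Or.inl (Or.inr (by simpa using h))
      · exact Or.inl (Or.inl (by simpa using h))
      · simp only [Set.mem_singleton_iff] at h
        subst h; exact Or.inr (by simp)
    obtain ⟨L, hLmem⟩ : ∃ L : List H, ∀ x, x ∈ L ↔ x ∈ U' := by
      refine ⟨hU'fin.toFinset.toList, fun x => ?_⟩
      rw [Finset.mem_toList, Set.Finite.mem_toFinset]
    set m := L.length
    set Y : Set H := Ytot U' (d' + 1) with hY
    have hYfin : Y.Finite := Ytot_finite hU'fin _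
    set N : Subgroup H := lowerCentralSeries (⊤ : Subgroup H) 1 with hN
    have hYN : Y ⊆ (N : Set H) := by
      intro y hy
      simp only [hY, Ytot, Set.mem_iUnion] at hy
      obtain ⟨w, _, hw⟩ := hy
      exact lowerCentralSeries_antitone _ (Nat.one_le_iff_ne_zero.2 (Nat.succ_ne_zero w))
        (Yl_sub U' w hw)
    -- the subgroup N is nilpotent of class ≤ d'
    have hNlcs : lowerCentralSeries (⊤ : Subgroup ↥N) d' = ⊥ := by
      have h1 : (lowerCentralSeries (⊤ : Subgroup ↥N) d').map N.subtype ≤ lowerCentralSeries (⊤ : Subgroup H) (d' + 1) :=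
        lcs_subgroup_le N rfl d'
      rw [hlcs] at h1
      have h2 : (lowerCentralSeries (⊤ : Subgroup ↥N) d').map N.subtype = ⊥ := le_bot_iff.1 h1
      exact (Subgroup.map_eq_bot_iff_of_injective _ N.subtype_injective).1 h2
    obtain ⟨C', k', hC', hbound⟩ := IH hNlcs (N.subtype ⁻¹' Y) (hYfin.preimage
      (Subtype.val_injective.injOn))
    refine ⟨C' * 2 ^ (m + (2 * d' + 3) * k'), m + (2 * d' + 3) * k',
      by positivity, fun n hn => ?_⟩
    -- main inclusion
    set t : ℕ := (n + 1) ^ (2 * d' + 3) with ht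
    have hincl : monoidBall U n ⊆ (fun p : List ℕ × H => pp L p.1 * p.2) ''
        (({a : List ℕ | a.length = m ∧ a.sum ≤ n} ×ˢ monoidBall Y t)) := by
      intro g hg
      obtain ⟨u, hulen, humem, hupr⟩ := hg
      have humem' : ∀ x ∈ u, x ∈ U' := fun x hx => Or.inl (Or.inl (humem x hx))
      obtain ⟨a, halen, hasum, τ, hτ, hid⟩ := normal_form hU'sym hlcs L
        (fun x hx => (hLmem x).1 hx) (fun x hx => (hLmem x).2 hx) u humem'
      refine ⟨(a, τ), ⟨⟨halen, by show a.sum ≤ n; omega⟩, ?_⟩, by simp [← hupr, hid]⟩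
      refine MB.mono_r ?_ hτ
      calc u.length * (u.length + 1) ^ (2 * d' + 2)
          ≤ (u.length + 1) * (u.length + 1) ^ (2 * d' + 2) := Nat.mul_le_mul_right _ (by omega)
        _ = (u.length + 1) ^ (2 * d' + 3) := by ring
        _ ≤ t := Nat.pow_le_pow_left (by omega) _
    -- cardinality estimates
    have hfin : (({a : List ℕ | a.length = m ∧ a.sum ≤ n} ×ˢ monoidBall Y t)).Finite :=
      (lists_finite m n).prod (MB.finite hYfin t)
    have hcard1 : Nat.card (monoidBall U n) ≤
        Nat.card (({a : List ℕ | a.length = m ∧ a.sum ≤ n} ×ˢ monoidBall Y t)) :=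
      le_trans (Nat.card_mono (hfin.image _) hincl) (Nat.card_image_le hfin)
    have hcard2 : Nat.card (monoidBall Y t) ≤ C' * t ^ k' := by
      have h1 := MB.card_le_subtype hYN hYfin t
      have h2 := hbound t (Nat.one_le_iff_ne_zero.2 (by positivity))
      omega
    have hcard3 : Nat.card {a : List ℕ | a.length = m ∧ a.sum ≤ n} ≤ (n + 1) ^ m :=
      card_lists_le m n
    rw [card_prod_set] at hcard1
    have hn2 : n + 1 ≤ 2 * n := by omega
    calc Nat.card (monoidBall U n)
        ≤ (n + 1) ^ m * (C' * t ^ k') := by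
          exact le_trans hcard1 (Nat.mul_le_mul hcard3 hcard2)
      _ ≤ (2 * n) ^ m * (C' * ((2 * n) ^ (2 * d' + 3)) ^ k') := by
          refine Nat.mul_le_mul (Nat.pow_le_pow_left hn2 _) (Nat.mul_le_mul_left _ ?_)
          exact Nat.pow_le_pow_left (Nat.pow_le_pow_left hn2 _) _
      _ = C' * 2 ^ (m + (2 * d' + 3) * k') * n ^ (m + (2 * d' + 3) * k') := by
          rw [← pow_mul (2 * n), mul_pow 2 n m, mul_pow 2 n ((2 * d' + 3) * k'),
            pow_add 2, pow_add n]
          ring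

end Nilp

section Schreier

variable {G : Type*} [Group G] (H : Subgroup G)

/-- coset function (right cosets) -/
noncomputable def rcos (g : G) : G ⧸ H := QuotientGroup.mk g⁻¹

/-- representative choice -/
noncomputable def rrep (g : G) : G := (Quotient.out (rcos H g))⁻¹

theorem rcos_eq_iff (a b : G) : rcos H a = rcos H b ↔ a * b⁻¹ ∈ H := by
  rw [rcos, rcos, QuotientGroup.eq, inv_inv]

theorem rcos_rrep (g : G) : rcos H (rrep H g) = rcos H g := by
  rw [rrep, rcos, inv_inv, QuotientGroup.out_eq']

theorem rrep_eq_of_rcos_eq {a b : G} (h : rcos H a = rcos H b) : rrep H a = rrep H b := by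
  rw [rrep, rrep, h]

theorem mul_rrep_inv_mem (g : G) : g * (rrep H g)⁻¹ ∈ H := by
  rw [← rcos_eq_iff]
  exact (rcos_rrep H g).symm

theorem rcos_mul_right {a b : G} (h : rcos H a = rcos H b) (t : G) :
    rcos H (a * t) = rcos H (b * t) := by
  rw [rcos_eq_iff] at h ⊢
  simpa [mul_assoc] using h

/-- Schreier generators -/
def schreierSet (T : Set G) : Set G :=
  {x | ∃ r ∈ Set.range (rrep H), ∃ t ∈ T, x = r * t * (rrep H (r * t))⁻¹}

theorem schreierSet_sub (T : Set G) : schreierSet H T ⊆ (H : Set G) := by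
  rintro x ⟨r, _, t, _, rfl⟩
  exact mul_rrep_inv_mem H (r * t)

theorem schreierSet_finite [H.FiniteIndex] {T : Set G} (hT : T.Finite) :
    (schreierSet H T).Finite := by
  have hrange : (Set.range (rrep H)).Finite := by
    have : Set.range (rrep H) ⊆ Set.range (fun q : G ⧸ H => (Quotient.out q)⁻¹) := by
      rintro x ⟨g, rfl⟩
      exact ⟨rcos H g, rfl⟩
    exact (Set.finite_range _).subset this
  have : schreierSet H T ⊆
      Set.image2 (fun r t => r * t * (rrep H (r * t))⁻¹) (Set.range (rrep H)) T := by
    rintro x ⟨r, hr, t, ht, rfl⟩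
    exact ⟨r, hr, t, ht, rfl⟩
  exact (Set.Finite.image2 _ hrange hT).subset this

theorem schreier_rewrite {T : Set G} :
    ∀ l : List G, (∀ t ∈ l, t ∈ T) →
      ∃ l' : List G, l'.length = l.length ∧ (∀ u ∈ l', u ∈ schreierSet H T) ∧
        l.prod = (rrep H 1)⁻¹ * l'.prod * rrep H l.prod := by
  intro l
  induction l using List.reverseRecOn with
  | nil =>
    intro _
    refine ⟨[], rfl, by simp, ?_⟩
    simp only [List.prod_nil]
    group
  | append_singleton l t ih =>
    intro hmem
    obtain ⟨l', hlen, hl'mem, hid⟩ := ih fun x hx => hmem x (List.mem_append_left _ hx)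
    have htT : t ∈ T := hmem t (by simp)
    set u : G := rrep H l.prod * t * (rrep H (rrep H l.prod * t))⁻¹ with hu
    have huS : u ∈ schreierSet H T := ⟨rrep H l.prod, ⟨l.prod, rfl⟩, t, htT, rfl⟩
    have hrr : rrep H (rrep H l.prod * t) = rrep H (l.prod * t) :=
      rrep_eq_of_rcos_eq H (rcos_mul_right H (rcos_rrep H l.prod) t)
    refine ⟨l' ++ [u], by simp [hlen], ?_, ?_⟩
    · intro x hx
      rcases List.mem_append.1 hx with h | h
      · exact hl'mem x h
      · simp only [List.mem_singleton] at h
        subst h; exact huS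
    · have hpt : (l ++ [t]).prod = l.prod * t := by
        rw [List.prod_append, List.prod_singleton]
      rw [hpt]
      calc l.prod * t = ((rrep H 1)⁻¹ * l'.prod * rrep H l.prod) * t := by
            conv_lhs => rw [hid]
        _ = (rrep H 1)⁻¹ * (l' ++ [u]).prod * rrep H (l.prod * t) := by
            rw [List.prod_append, List.prod_singleton, hu, hrr]
            group
end Schreier

/-- final reduction: ball cardinality bound for virtually nilpotent groups -/
theorem ball_poly_growth {G : Type*} [Group G] (T : Set G) (hTfin : T.Finite)
    (H : Subgroup G) [H.FiniteIndex] (hHnilp : Group.IsNilpotent H) :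
    ∃ C k : ℕ, 0 < C ∧ ∀ r : ℕ, 1 ≤ r → Nat.card (monoidBall T r) ≤ C * r ^ k := by
  obtain ⟨d, hd⟩ := nilpotent_iff_lowerCentralSeries.1 hHnilp
  set U : Set G := schreierSet H T with hU
  have hUfin : U.Finite := schreierSet_finite H hTfin
  have hUH : U ⊆ (H : Set G) := schreierSet_sub H T
  obtain ⟨C', k', hC', hbound⟩ := Nilp.poly_growth d hd (H.subtype ⁻¹' U)
    (hUfin.preimage (Subtype.val_injective.injOn))
  have hrangefin : (Set.range (rrep H)).Finite := by
    have : Set.range (rrep H) ⊆ Set.range (fun q : G ⧸ H => (Quotient.out q)⁻¹) := by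
      rintro x ⟨g, rfl⟩
      exact ⟨rcos H g, rfl⟩
    exact (Set.finite_range _).subset this
  refine ⟨(Nat.card (Set.range (rrep H)) + 1) * C', k', by positivity, fun r hr => ?_⟩
  have hincl : monoidBall T r ⊆ (fun p : G × G => (rrep H 1)⁻¹ * p.1 * p.2) ''
      (monoidBall U r ×ˢ Set.range (rrep H)) := by
    rintro g ⟨l, hlen, hmem, rfl⟩
    obtain ⟨l', hlen', hmem', hid⟩ := schreier_rewrite H l hmem
    exact ⟨(l'.prod, rrep H l.prod), ⟨⟨l', by omega, hmem', rfl⟩, ⟨l.prod, rfl⟩⟩, hid.symm⟩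
  have hfin : (monoidBall U r ×ˢ Set.range (rrep H)).Finite :=
    (MB.finite hUfin r).prod hrangefin
  have h1 : Nat.card (monoidBall T r) ≤
      Nat.card (monoidBall U r ×ˢ Set.range (rrep H) : Set (G × G)) :=
    le_trans (Nat.card_mono (hfin.image _) hincl) (Nat.card_image_le hfin)
  rw [Nilp.card_prod_set] at h1
  have h2 : Nat.card (monoidBall U r) ≤ C' * r ^ k' :=
    le_trans (MB.card_le_subtype hUH hUfin r) (hbound r hr)
  calc Nat.card (monoidBall T r)
      ≤ Nat.card (monoidBall U r) * Nat.card (Set.range (rrep H)) := h1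
    _ ≤ (C' * r ^ k') * (Nat.card (Set.range (rrep H)) + 1) :=
        Nat.mul_le_mul h2 (by omega)
    _ = (Nat.card (Set.range (rrep H)) + 1) * C' * r ^ k' := by ring


/-- The coset group of a finitely generated virtually nilpotent group by a finite group of
automorphisms has polynomial growth: the number of `A`-orbits meeting `B⁺_T(r)` (i.e. the
cardinality of the ball of radius `r` at the unit of the coset group) is at most `C·r^k`. -/
theorem cosetGroup_polynomial_growth (S : Set G) (hSfin : S.Finite)
    (hSsym : ∀ s ∈ S, s⁻¹ ∈ S) (hSgen : Subgroup.closure S = ⊤)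
    (H : Subgroup G) (hHfi : H.FiniteIndex) (hHnilp : Group.IsNilpotent H)
    (A : Subgroup (MulAut G)) (hAfin : Finite A) :
    ∃ C k : ℕ, 0 < C ∧ ∀ r : ℕ, 1 ≤ r →
      Nat.card (orbitMap A '' monoidBall {x | ∃ s ∈ S, ∃ a ∈ A, a s = x} r) ≤ C * r ^ k := by
  haveI := hHfi
  have hAsetfin : (A : Set (MulAut G)).Finite := Set.finite_coe_iff.mp hAfin
  have hTfin : ({x | ∃ s ∈ S, ∃ a ∈ A, a s = x} : Set G).Finite := by
    have hsub : ({x | ∃ s ∈ S, ∃ a ∈ A, a s = x} : Set G) ⊆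
        Set.image2 (fun (a : MulAut G) (s : G) => a s) (A : Set (MulAut G)) S := by
      rintro x ⟨s, hs, a, ha, rfl⟩
      exact ⟨a, ha, s, hs, rfl⟩
    exact (Set.Finite.image2 _ hAsetfin hSfin).subset hsub
  obtain ⟨C, k, hC, hbound⟩ := ball_poly_growth _ hTfin H hHnilp
  exact ⟨C, k, hC, fun r hr =>
    le_trans (Nat.card_image_le (MB.finite hTfin r)) (hbound r hr)⟩
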